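/- Let $E,F$ be Banach spaces and $(L_\beta)$ a net of compact operators on $F$ with $\sup_\beta\|L_\beta\|\le 1$, $L_\beta y\to y$ for all $y\in F$, and such that $(L_\beta)$ converges weak-star in $\mathcal{K}(F)^{**}$ to some $L_0$. Let $V$ be the space of bounded linear operators from a Banach space $Z$ to $F$, and $W\subset V$ the closed subspace of compact operators. Define $\Lambda:V^*\to V^*$ by $\Lambda(f)(T)=\lim_\beta f(L_\beta\circ T)$. Then $\Lambda$ is a well-defined bounded linear map with $\|\Lambda\|\le 1$ and $\Lambda(f)(T)=f(T)$ for every compact $T\in W$ and $f\in V^*$. -/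

import Mathlib

namespace NormedSpace

/-- The topological dual of a seminormed space `E` (as in older Mathlib, now removed). -/
abbrev Dual (𝕜 : Type*) [NontriviallyNormedField 𝕜] (E : Type*) [SeminormedAddCommGroup E]
    [NormedSpace 𝕜 E] : Type _ :=
  E →L[𝕜] 𝕜

end NormedSpace

open Filter NormedSpace

theorem stmt10 {F : Type*} [NormedAddCommGroup F] [NormedSpace ℝ F] [CompleteSpace F]
    {Z : Type*} [NormedAddCommGroup Z] [NormedSpace ℝ Z] [CompleteSpace Z]
    {ι : Type*} [Preorder ι] [IsDirected ι (· ≤ ·)] [Nonempty ι]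
    (L : ι → F →L[ℝ] F) (hcpt : ∀ β, IsCompactOperator (L β))
    (hnorm : ∀ β, ‖L β‖ ≤ 1)
    (hpt : ∀ y : F, Tendsto (fun β => L β y) atTop (nhds y))
    (hwstar : ∀ ψ : Dual ℝ (F →L[ℝ] F), ∃ l : ℝ, Tendsto (fun β => ψ (L β)) atTop (nhds l)) :
    ∃ Λ : Dual ℝ (Z →L[ℝ] F) →L[ℝ] Dual ℝ (Z →L[ℝ] F),
      (∀ (f : Dual ℝ (Z →L[ℝ] F)) (T : Z →L[ℝ] F),
        Tendsto (fun β => f ((L β).comp T)) atTop (nhds (Λ f T))) ∧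
      ‖Λ‖ ≤ 1 ∧
      (∀ (f : Dual ℝ (Z →L[ℝ] F)) (T : Z →L[ℝ] F), IsCompactOperator T → Λ f T = f T) := by
  classical
  have key : ∀ (f : Dual ℝ (Z →L[ℝ] F)) (T : Z →L[ℝ] F),
      ∃ l : ℝ, Tendsto (fun β => f ((L β).comp T)) atTop (nhds l) := by
    intro f T
    exact hwstar (f.comp ((ContinuousLinearMap.compL ℝ Z F F).flip T))
  choose lam hlam using key
  have hadd : ∀ f g T, lam (f + g) T = lam f T + lam g T := fun f g T =>
    tendsto_nhds_unique (hlam (f + g) T) (((hlam f T).add (hlam g T)).congr fun β => rfl)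
  have hsmulf : ∀ (c : ℝ) f T, lam (c • f) T = c * lam f T := fun c f T =>
    tendsto_nhds_unique (hlam (c • f) T) (((hlam f T).const_mul c).congr fun β => rfl)
  have haddT : ∀ f T T', lam f (T + T') = lam f T + lam f T' := by
    intro f T T'
    refine tendsto_nhds_unique (hlam f (T + T')) (((hlam f T).add (hlam f T')).congr ?_)
    intro β; simp [ContinuousLinearMap.comp_add]
  have hsmulT : ∀ f (c : ℝ) T, lam f (c • T) = c * lam f T := by
    intro f c T
    refine tendsto_nhds_unique (hlam f (c • T)) (((hlam f T).const_mul c).congr ?_)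
    intro β; simp [ContinuousLinearMap.comp_smul]
  have hbound : ∀ f T, |lam f T| ≤ ‖f‖ * ‖T‖ := by
    intro f T
    refine le_of_tendsto (hlam f T).abs (Eventually.of_forall fun β => ?_)
    calc |f ((L β).comp T)| ≤ ‖f‖ * ‖(L β).comp T‖ := f.le_opNorm _
      _ ≤ ‖f‖ * (‖L β‖ * ‖T‖) :=
        mul_le_mul_of_nonneg_left (ContinuousLinearMap.opNorm_comp_le _ _) (norm_nonneg f)
      _ ≤ ‖f‖ * (1 * ‖T‖) :=
        mul_le_mul_of_nonneg_left
          (mul_le_mul_of_nonneg_right (hnorm β) (norm_nonneg T)) (norm_nonneg f)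
      _ = ‖f‖ * ‖T‖ := by ring
  let Lf : Dual ℝ (Z →L[ℝ] F) → Dual ℝ (Z →L[ℝ] F) := fun f =>
    LinearMap.mkContinuous
      { toFun := lam f, map_add' := haddT f, map_smul' := fun c T => hsmulT f c T }
      ‖f‖ (fun T => by simpa [Real.norm_eq_abs] using hbound f T)
  have hLf : ∀ f T, Lf f T = lam f T := fun f T => rfl
  have hLfnorm : ∀ f, ‖Lf f‖ ≤ ‖f‖ :=
    fun f => LinearMap.mkContinuous_norm_le _ (norm_nonneg f) _
  let Λ : Dual ℝ (Z →L[ℝ] F) →L[ℝ] Dual ℝ (Z →L[ℝ] F) :=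
    LinearMap.mkContinuous
      { toFun := Lf,
        map_add' := fun f g => by ext T; simp [hLf, hadd],
        map_smul' := fun c f => by ext T; simp [hLf, hsmulf, smul_eq_mul] }
      1 (fun f => by simpa using hLfnorm f)
  refine ⟨Λ, fun f T => hlam f T, ?_, ?_⟩
  · exact LinearMap.mkContinuous_norm_le _ zero_le_one _
  · intro f T hT
    have hconv : Tendsto (fun β => (L β).comp T) atTop (nhds T) := by
      rw [Metric.tendsto_nhds]
      intro ε hε
      obtain ⟨K, hK, hTK⟩ :=
        hT.image_closedBall_subset_compact (𝕜₁ := ℝ) (f := (T : Z →ₗ[ℝ] F)) 1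
      obtain ⟨t, htfin, htcover⟩ := Metric.totallyBounded_iff.mp hK.totallyBounded (ε/4) (by positivity)
      have hev : ∀ᶠ β in atTop, ∀ y ∈ t, ‖L β y - y‖ < ε/4 := by
        rw [eventually_all_finite htfin]
        intro y _
        have := Metric.tendsto_nhds.mp (hpt y) (ε/4) (by positivity)
        filter_upwards [this] with β hβ
        rwa [dist_eq_norm] at hβ
      filter_upwards [hev] with β hβ
      rw [dist_eq_norm]
      have hle : ‖(L β).comp T - T‖ ≤ 3 * (ε/4) := by
        refine ContinuousLinearMap.opNorm_le_of_unit_norm (by positivity) ?_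
        intro x hx
        have hx1 : T x ∈ K := hTK ⟨x, by simp [Metric.mem_closedBall, dist_zero_right, hx.le], rfl⟩
        obtain ⟨y, hyt, hy⟩ : ∃ y ∈ t, T x ∈ Metric.ball y (ε/4) := by
          simpa using htcover hx1
        have h1 : ‖L β (T x - y)‖ ≤ ‖T x - y‖ := by
          have := (L β).le_opNorm (T x - y)
          nlinarith [norm_nonneg (T x - y), hnorm β]
        have h2 : ‖L β y - y‖ < ε/4 := hβ y hyt
        have h3 : ‖T x - y‖ < ε/4 := by
          rw [← dist_eq_norm]; exact Metric.mem_ball.mp hy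
        have heq : ((L β).comp T - T) x = L β (T x - y) + (L β y - y) + (y - T x) := by
          simp [map_sub]
        calc ‖((L β).comp T - T) x‖
            ≤ ‖L β (T x - y)‖ + ‖L β y - y‖ + ‖y - T x‖ := by
              rw [heq]; exact norm_add₃_le
          _ ≤ ε/4 + ε/4 + ε/4 := by
              have : ‖y - T x‖ = ‖T x - y‖ := norm_sub_rev _ _
              linarith
          _ = 3 * (ε/4) := by ring
      linarith
    exact tendsto_nhds_unique (hlam f T) ((f.continuous.tendsto T).comp hconv)
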